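/- Let δ > 0 be a real number and let 1 ≤ n_i ≤ n be integers. Define n_v(0) = 3, n_v(u) = 6(δ+4)^{u-1} for u ≥ 1, s(u,m) = 2(δ+2)^{m-u}, and k(u,m) = (2(δ+2)^{m-u} + 2δ)/(δ+1). Then ( Σ_{u=0}^{n_i−1} n_v(u)·s(u,n_i−1)·k(u,n)·(1+δ)^{n−n_i} + n_v(n_i)·k(n_i,n)·(1+δ)^{n−n_i} + Σ_{u=n_i+1}^{n} n_v(n_i)·s(n_i,u−1)·k(u,n)·(1+δ)^{n−u} ) / ( n_v(n_i)·s(n_i,n) ) = 2[(δ+1)^{n−n_i−1} + δ² + δ − 1]/(δ(δ+2)) − 2(δ+2)(δ+1)^{n−n_i−1}/(δ(δ+3)) + (δ+1)^{n−n_i−1} + (δ+1)^{n−n_i}(δ+2)^{2n_i}(δ+4)^{1−n_i}/(δ(δ+3)). -/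

import Mathlib

set_option maxHeartbeats 2000000 in
/-- Weighted average nearest-neighbor degree of vertices created at iteration `ni`. -/
theorem stmt9 (δ : ℝ) (hδ : 0 < δ) (ni n : ℕ) (h1 : 1 ≤ ni) (h2 : ni ≤ n)
    (nv : ℕ → ℝ) (hnv0 : nv 0 = 3)
    (hnv : ∀ u : ℕ, 1 ≤ u → nv u = 6 * (δ + 4) ^ (u - 1))
    (s k : ℕ → ℕ → ℝ)
    (hs : ∀ u m : ℕ, u ≤ m → s u m = 2 * (δ + 2) ^ (m - u))
    (hk : ∀ u m : ℕ, u ≤ m → k u m = (2 * (δ + 2) ^ (m - u) + 2 * δ) / (δ + 1)) :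
    ((∑ u ∈ Finset.range ni, nv u * s u (ni - 1) * k u n * (1 + δ) ^ (n - ni)) +
        nv ni * k ni n * (1 + δ) ^ (n - ni) +
        ∑ u ∈ Finset.Icc (ni + 1) n, nv ni * s ni (u - 1) * k u n * (1 + δ) ^ (n - u)) /
      (nv ni * s ni n) =
    2 * ((δ + 1) ^ ((n : ℤ) - (ni : ℤ) - 1) + δ ^ 2 + δ - 1) / (δ * (δ + 2)) -
      2 * (δ + 2) * (δ + 1) ^ ((n : ℤ) - (ni : ℤ) - 1) / (δ * (δ + 3)) +
      (δ + 1) ^ ((n : ℤ) - (ni : ℤ) - 1) +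
      (δ + 1) ^ (n - ni) * (δ + 2) ^ (2 * ni) * (δ + 4) ^ (1 - (ni : ℤ)) /
        (δ * (δ + 3)) := by
  obtain ⟨m, rfl⟩ : ∃ m, ni = m + 1 := ⟨ni - 1, by omega⟩
  have hd : δ ≠ 0 := ne_of_gt hδ
  have hr : δ + 1 ≠ 0 := by positivity
  have hp : δ + 2 ≠ 0 := by positivity
  have h3 : δ + 3 ≠ 0 := by positivity
  have hq : δ + 4 ≠ 0 := by positivity
  have hx1 : (δ + 4) * ((δ + 2) * (δ + 2))⁻¹ - 1 ≠ 0 := by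
    have : (δ + 4) * ((δ + 2) * (δ + 2))⁻¹ - 1 = (-(δ * δ) - 3 * δ) * ((δ + 2) * (δ + 2))⁻¹ := by
      field_simp; ring
    rw [this]
    exact mul_ne_zero (by nlinarith) (inv_ne_zero (mul_ne_zero hp hp))
  have hy1 : (δ + 4) * (δ + 2)⁻¹ - 1 ≠ 0 := by
    have : (δ + 4) * (δ + 2)⁻¹ - 1 = 2 * (δ + 2)⁻¹ := by field_simp; ring
    rw [this]; exact mul_ne_zero two_ne_zero (inv_ne_zero hp)
  have hz1 : (δ + 1)⁻¹ - 1 ≠ 0 := by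
    have : (δ + 1)⁻¹ - 1 = -δ * (δ + 1)⁻¹ := by field_simp; ring
    rw [this]; exact mul_ne_zero (by nlinarith) (inv_ne_zero hr)
  have hw1 : (δ + 2) * (δ + 1)⁻¹ - 1 ≠ 0 := by
    have : (δ + 2) * (δ + 1)⁻¹ - 1 = (δ + 1)⁻¹ := by field_simp; ring
    rw [this]; exact inv_ne_zero hr
  have hx : (δ + 4) * ((δ + 2) * (δ + 2))⁻¹ ≠ 1 := sub_ne_zero.mp hx1
  have hy : (δ + 4) * (δ + 2)⁻¹ ≠ 1 := sub_ne_zero.mp hy1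
  have hz : (δ + 1)⁻¹ ≠ 1 := sub_ne_zero.mp hz1
  have hw : (δ + 2) * (δ + 1)⁻¹ ≠ 1 := sub_ne_zero.mp hw1
  have hPm : (δ + 2) ^ m ≠ 0 := pow_ne_zero _ hp
  have hQm : (δ + 4) ^ m ≠ 0 := pow_ne_zero _ hq
  have hPd : (δ + 2) ^ (n - (m + 1)) ≠ 0 := pow_ne_zero _ hp
  have hR : (δ + 1) ^ (n - (m + 1)) ≠ 0 := pow_ne_zero _ hr
  -- closed form for the first sum
  have hstep : ∀ t ∈ Finset.range m, nv (t + 1) * s (t + 1) m * k (t + 1) n *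
      (δ + 1) ^ (n - (m + 1))
      = (24 * (δ + 2) ^ m * (δ + 2) ^ n * ((δ + 2) * (δ + 2) * (δ + 1))⁻¹ *
          (δ + 1) ^ (n - (m + 1))) * ((δ + 4) * ((δ + 2) * (δ + 2))⁻¹) ^ t
        + (24 * δ * (δ + 2) ^ m * ((δ + 2) * (δ + 1))⁻¹ * (δ + 1) ^ (n - (m + 1))) *
          ((δ + 4) * (δ + 2)⁻¹) ^ t := by
    intro t ht
    rw [Finset.mem_range] at ht
    rw [hnv (t + 1) (by omega), hs (t + 1) m (by omega), hk (t + 1) n (by omega),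
      pow_sub₀ _ hp (by omega : t + 1 ≤ m), pow_sub₀ _ hp (by omega : t + 1 ≤ n)]
    simp only [Nat.add_sub_cancel, pow_succ, mul_pow, inv_pow]
    have hpt : (δ + 2) ^ t ≠ 0 := pow_ne_zero _ hp
    field_simp
    ring
  have S1 : (∑ u ∈ Finset.range (m + 1), nv u * s u m * k u n * (δ + 1) ^ (n - (m + 1)))
      = 3 * (2 * (δ + 2) ^ m) * ((2 * (δ + 2) ^ n + 2 * δ) / (δ + 1)) *
          (δ + 1) ^ (n - (m + 1))
        + (24 * (δ + 2) ^ m * (δ + 2) ^ n * ((δ + 2) * (δ + 2) * (δ + 1))⁻¹ *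
            (δ + 1) ^ (n - (m + 1))) *
          ((((δ + 4) * ((δ + 2) * (δ + 2))⁻¹) ^ m - 1) / ((δ + 4) * ((δ + 2) * (δ + 2))⁻¹ - 1))
        + (24 * δ * (δ + 2) ^ m * ((δ + 2) * (δ + 1))⁻¹ * (δ + 1) ^ (n - (m + 1))) *
          ((((δ + 4) * (δ + 2)⁻¹) ^ m - 1) / ((δ + 4) * (δ + 2)⁻¹ - 1)) := by
    rw [Finset.sum_range_succ', Finset.sum_congr rfl hstep, Finset.sum_add_distrib,
      ← Finset.mul_sum, ← Finset.mul_sum, geom_sum_eq hx m, geom_sum_eq hy m,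
      hnv0, hs 0 m (by omega), hk 0 n (by omega)]
    simp only [Nat.sub_zero]
    ring
  -- closed form for the second sum
  have hstep3 : ∀ t ∈ Finset.range (n - (m + 1)),
      nv (m + 1) * s (m + 1) (m + 1 + 1 + t - 1) * k (m + 1 + 1 + t) n *
        (δ + 1) ^ (n - (m + 1 + 1 + t))
      = (24 * (δ + 4) ^ m * (δ + 2) ^ (n - (m + 1)) * ((δ + 2) * ((δ + 1) * (δ + 1)))⁻¹ *
          (δ + 1) ^ (n - (m + 1))) * ((δ + 1)⁻¹) ^ t
        + (24 * δ * (δ + 4) ^ m * ((δ + 1) * (δ + 1))⁻¹ * (δ + 1) ^ (n - (m + 1))) *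
          ((δ + 2) * (δ + 1)⁻¹) ^ t := by
    intro t ht
    rw [Finset.mem_range] at ht
    rw [show m + 1 + 1 + t - 1 = m + 1 + t from by omega,
      hnv (m + 1) (by omega), hs (m + 1) (m + 1 + t) (by omega),
      hk (m + 1 + 1 + t) n (by omega),
      show m + 1 + t - (m + 1) = t from by omega,
      show n - (m + 1 + 1 + t) = (n - (m + 1)) - (t + 1) from by omega,
      pow_sub₀ _ hp (by omega : t + 1 ≤ n - (m + 1)),
      pow_sub₀ _ hr (by omega : t + 1 ≤ n - (m + 1))]
    simp only [Nat.add_sub_cancel, pow_succ, mul_pow, inv_pow]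
    have hpt : (δ + 2) ^ t ≠ 0 := pow_ne_zero _ hp
    have hrt : (δ + 1) ^ t ≠ 0 := pow_ne_zero _ hr
    field_simp
    ring
  have S3 : (∑ u ∈ Finset.Icc (m + 1 + 1) n,
        nv (m + 1) * s (m + 1) (u - 1) * k u n * (δ + 1) ^ (n - u))
      = (24 * (δ + 4) ^ m * (δ + 2) ^ (n - (m + 1)) * ((δ + 2) * ((δ + 1) * (δ + 1)))⁻¹ *
          (δ + 1) ^ (n - (m + 1))) *
          ((((δ + 1)⁻¹) ^ (n - (m + 1)) - 1) / ((δ + 1)⁻¹ - 1))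
        + (24 * δ * (δ + 4) ^ m * ((δ + 1) * (δ + 1))⁻¹ * (δ + 1) ^ (n - (m + 1))) *
          ((((δ + 2) * (δ + 1)⁻¹) ^ (n - (m + 1)) - 1) / ((δ + 2) * (δ + 1)⁻¹ - 1)) := by
    rw [← Finset.Ico_add_one_right_eq_Icc, Finset.sum_Ico_eq_sum_range,
      show n + 1 - (m + 1 + 1) = n - (m + 1) from by omega,
      Finset.sum_congr rfl hstep3, Finset.sum_add_distrib,
      ← Finset.mul_sum, ← Finset.mul_sum, geom_sum_eq hz _, geom_sum_eq hw _]
  -- middle term and denominator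
  have S2 : nv (m + 1) * k (m + 1) n * (δ + 1) ^ (n - (m + 1))
      = 6 * (δ + 4) ^ m * ((2 * (δ + 2) ^ (n - (m + 1)) + 2 * δ) / (δ + 1)) *
        (δ + 1) ^ (n - (m + 1)) := by
    rw [hnv (m + 1) (by omega), hk (m + 1) n h2]
    simp only [Nat.add_sub_cancel]
  have D : nv (m + 1) * s (m + 1) n = 12 * (δ + 4) ^ m * (δ + 2) ^ (n - (m + 1)) := by
    rw [hnv (m + 1) (by omega), hs (m + 1) n h2]
    simp only [Nat.add_sub_cancel]
    ring
  simp only [show (1 : ℝ) + δ = δ + 1 from add_comm 1 δ, Nat.add_sub_cancel]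
  rw [S1, S2, S3, D]
  -- rewrite the integer powers on the RHS
  rw [show (n : ℤ) - ((m + 1 : ℕ) : ℤ) - 1 = ((n - (m + 1) : ℕ) : ℤ) - 1 from by
      rw [Nat.cast_sub h2],
    zpow_sub₀ hr, zpow_natCast, zpow_one,
    show (1 : ℤ) - ((m + 1 : ℕ) : ℤ) = -(m : ℤ) from by push_cast; ring,
    zpow_neg, zpow_natCast,
    show 2 * (m + 1) = (m + 1) + (m + 1) from by ring, pow_add,
    show (δ + 2) ^ n = (δ + 2) ^ (n - (m + 1)) * (δ + 2) ^ (m + 1) from by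
      rw [← pow_add]; congr 1; omega]
  simp only [pow_succ, mul_pow, inv_pow]
  have hnd : -(δ * (δ + 3)) ≠ 0 := neg_ne_zero.mpr (mul_ne_zero hd h3)
  have hmd : -δ ≠ 0 := neg_ne_zero.mpr hd
  rw [show (δ + 4) * ((δ + 2) * (δ + 2))⁻¹ - 1 = -(δ * (δ + 3)) / ((δ + 2) * (δ + 2)) from by
      field_simp; ring,
    show (δ + 4) * (δ + 2)⁻¹ - 1 = 2 / (δ + 2) from by field_simp; ring,
    show (δ + 1)⁻¹ - 1 = -δ / (δ + 1) from by field_simp; ring,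
    show (δ + 2) * (δ + 1)⁻¹ - 1 = 1 / (δ + 1) from by field_simp; ring]
  field_simp
  ring
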